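/- Let Θ be a nonempty set, p ≥ 1, κ > 0, and for each θ ∈ Θ and j ∈ [p] let v_{θj}, v*_{θj}, μ_{θj} ∈ ℝ and r_{θj} > 0, with V := sup_{θ∈Θ, j∈[p]} (|v_{θj}| ∨ |v*_{θj}|) < ∞, sup_{θ,j} r_{θj} < ∞ and sup_{θ,j} r_{θj}^{-1} < ∞. Assume: (i) inf_{θ∈Θ} max_{j∈[p]} μ_{θj} < −8V, and (ii) 7/8 ≥ (1/8)·(1 + κ^{-1}·sup_{θ,j} r_{θj})·sup_{θ,j} r_{θj}^{-1} + κ^{-1}. Then inf_{θ∈Θ} max_{j∈[p]} (v_{θj} + μ_{θj})·r_{θj} ≤ inf_{θ∈Θ} max_{j∈[p]} [ v*_{θj} + κ^{-1}·(v_{θj} + μ_{θj})·r_{θj} ]. -/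
import Mathlib


/-- Deterministic comparison of the MinMax statistic with the penalized-resampling
bootstrap statistic when all the population moments are very negative
(`T_n(η) ≤ R_n^{PR*}` on the relevant event).  Here `θ` ranges over the (abstract) null
parameter set `ι`, `v θ j` is the standardized empirical process, `vstar θ j` the
bootstrap process, `μ θ j` the standardized population moment, `r θ j` the ratio of the
population to the sample standard deviation, and `κ` the penalization parameter. -/
theorem minMax_le_penalized_bootstrap {ι : Type*} [Nonempty ι] (p : ℕ) [NeZero p]
    (κ : ℝ) (hκ : 0 < κ)
    (v vstar μ r : ι → Fin p → ℝ) (hr : ∀ θ j, 0 < r θ j)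
    (V Rb Rinv : ℝ)
    (hVv : ∀ θ j, |v θ j| ≤ V) (hVvs : ∀ θ j, |vstar θ j| ≤ V)
    (hRb : ∀ θ j, r θ j ≤ Rb) (hRinv : ∀ θ j, (r θ j)⁻¹ ≤ Rinv)
    (h1 : ∃ θ, (Finset.univ.sup' Finset.univ_nonempty fun j => μ θ j) < -8 * V)
    (h2 : (1 / 8 : ℝ) * (1 + κ⁻¹ * Rb) * Rinv + κ⁻¹ ≤ 7 / 8) :
    (⨅ θ : ι, (((Finset.univ.sup' Finset.univ_nonempty
        fun j => (v θ j + μ θ j) * r θ j) : ℝ) : EReal)) ≤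
      ⨅ θ : ι, (((Finset.univ.sup' Finset.univ_nonempty
        fun j => vstar θ j + κ⁻¹ * ((v θ j + μ θ j) * r θ j)) : ℝ) : EReal) := by
  classical
  obtain ⟨θ₀, hθ₀⟩ := h1
  set c : ℝ := κ⁻¹ with hc_def
  have hc : 0 < c := inv_pos.2 hκ
  obtain ⟨j0⟩ : Nonempty (Fin p) := inferInstance
  have θa : ι := Classical.arbitrary ι
  have hV0 : 0 ≤ V := le_trans (abs_nonneg _) (hVv θa j0)
  have hRinv0 : 0 < Rinv := lt_of_lt_of_le (inv_pos.2 (hr θa j0)) (hRinv θa j0)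
  have hRb0 : 0 < Rb := lt_of_lt_of_le (hr θa j0) (hRb θa j0)
  have hcRbR : 0 ≤ c * Rb * Rinv := by positivity
  have hc78 : c ≤ 7 / 8 := by nlinarith
  have h1c : 0 < 1 - c := by linarith
  have hRle : Rinv ≤ 7 * (1 - c) := by nlinarith
  set F : ι → ℝ := fun θ =>
    Finset.univ.sup' Finset.univ_nonempty fun j => (v θ j + μ θ j) * r θ j with hF
  set G : ι → ℝ := fun θ =>
    Finset.univ.sup' Finset.univ_nonempty fun j =>
      vstar θ j + c * ((v θ j + μ θ j) * r θ j) with hG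
  have hFθ₀ : F θ₀ ≤ -7 * V / Rinv := by
    rw [hF]
    apply Finset.sup'_le
    intro j _
    have hμ : μ θ₀ j ≤ Finset.univ.sup' Finset.univ_nonempty fun j => μ θ₀ j :=
      Finset.le_sup' _ (Finset.mem_univ j)
    have hv : v θ₀ j ≤ V := le_trans (le_abs_self _) (hVv θ₀ j)
    have hsum : v θ₀ j + μ θ₀ j ≤ -7 * V := by linarith
    have hrp := hr θ₀ j
    have hrlow : Rinv⁻¹ ≤ r θ₀ j := by
      rw [inv_le_comm₀ hRinv0 hrp]
      exact hRinv θ₀ j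
    calc (v θ₀ j + μ θ₀ j) * r θ₀ j
        ≤ (-7 * V) * r θ₀ j := mul_le_mul_of_nonneg_right hsum hrp.le
      _ ≤ (-7 * V) * Rinv⁻¹ := mul_le_mul_of_nonpos_left hrlow (by linarith)
      _ = -7 * V / Rinv := by rw [div_eq_mul_inv]
  have key : ∀ θ, F θ₀ ≤ G θ ∨ F θ ≤ G θ := by
    intro θ
    by_cases hcase : F θ ≤ G θ
    · exact Or.inr hcase
    push_neg at hcase
    left
    obtain ⟨j₁, -, hj₁⟩ := Finset.exists_mem_eq_sup' (Finset.univ_nonempty)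
      (fun j => (v θ j + μ θ j) * r θ j)
    have hGlb : -V + c * F θ ≤ G θ := by
      have hle : vstar θ j₁ + c * ((v θ j₁ + μ θ j₁) * r θ j₁) ≤ G θ :=
        Finset.le_sup' (fun j => vstar θ j + c * ((v θ j + μ θ j) * r θ j))
          (Finset.mem_univ j₁)
      have hvs : -V ≤ vstar θ j₁ := neg_le_of_abs_le (hVvs θ j₁)
      have hFj : F θ = (v θ j₁ + μ θ j₁) * r θ j₁ := hj₁
      rw [hFj]
      linarith
    have hFlow : -V < F θ * (1 - c) := by nlinarith
    have step1 : -7 * V / Rinv ≤ -V / (1 - c) := by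
      rw [div_le_div_iff₀ hRinv0 h1c]
      nlinarith [mul_nonneg hV0 (sub_nonneg.2 hRle)]
    have step2 : -V / (1 - c) < -V + c * F θ := by
      rw [div_lt_iff₀ h1c]
      nlinarith [mul_lt_mul_of_pos_left hFlow hc]
    linarith
  refine le_iInf fun θ => ?_
  rcases key θ with h | h
  · exact le_trans (iInf_le _ θ₀) (by exact_mod_cast h)
  · exact le_trans (iInf_le _ θ) (by exact_mod_cast h)
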